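/- Let M ≥ 1, r ∈ ℝ^M, P ⊂ ℝ^M finite, and let D(P, r) = ⋃_{p ∈ P} [r, p] denote the dominated region. Suppose S_1, …, S_K with S_k = Ico(l_k, u_k), l_k, u_k ∈ ℝ^M, are pairwise disjoint boxes such that each S_k ⊆ {y : r ≤ y} and S_k ∩ D(P, r) = ∅. Let f_1, …, f_q ∈ ℝ^M and set A_i = ({y : r ≤ y ≤ f_i}) \ D(P, r); assume ⋃_{i=1}^q A_i ⊆ ⋃_{k=1}^K S_k. Then λ_M(⋃_{i=1}^q A_i) = Σ_{k=1}^K Σ_{j=1}^q Σ_{∅ ≠ J ⊆ {1,…,q}, |J| = j} (−1)^{j+1} ∏_{m=1}^M [z_{k,J}^{(m)} − l_k^{(m)}]_+, where z_{k,J}^{(m)} = min(u_k^{(m)}, min_{i ∈ J} f_i^{(m)}). -/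

import Mathlib

open MeasureTheory

lemma vol_Ico_inter_Iic (a b c : ℝ) :
    volume (Set.Ico a b ∩ Set.Iic c) = ENNReal.ofReal (min b c - a) := by
  rcases le_or_gt b c with h | h
  · have hsub : Set.Ico a b ⊆ Set.Iic c := fun x hx => le_trans (le_of_lt hx.2) h
    rw [min_eq_left h, Set.inter_eq_left.2 hsub, Real.volume_Ico]
  · have hset : Set.Ico a b ∩ Set.Iic c = Set.Icc a c := by
      ext x
      simp only [Set.mem_inter_iff, Set.mem_Ico, Set.mem_Iic, Set.mem_Icc]
      exact ⟨fun ⟨⟨h1, _⟩, h3⟩ => ⟨h1, h3⟩, fun ⟨h1, h3⟩ => ⟨⟨h1, lt_of_le_of_lt h3 h⟩, h3⟩⟩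
    rw [hset, Real.volume_Icc, min_eq_right h.le]

lemma ie_measure {X : Type*} [MeasurableSpace X] (μ : Measure X) {ι : Type*} [Fintype ι]
    (B : ι → Set X) (hm : ∀ i, MeasurableSet (B i)) (hf : ∀ i, μ (B i) ≠ ⊤) :
    (μ (⋃ i, B i)).toReal = ∑ J ∈ (Finset.univ : Finset ι).powerset,
      (if J.Nonempty then (-1 : ℝ) ^ (J.card + 1) else 0) * (μ (⋂ i ∈ J, B i)).toReal := by
  classical
  have hmeas : ∀ J : Finset ι, MeasurableSet (⋂ i ∈ J, B i) := fun J =>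
    MeasurableSet.biInter J.countable_toSet fun i _ => hm i
  have key : ∀ x, Set.indicator (⋃ i, B i) (1 : X → ℝ) x =
      ∑ J ∈ (Finset.univ : Finset ι).powerset,
        (if J.Nonempty then (-1 : ℝ) ^ (J.card + 1) else 0) *
          Set.indicator (⋂ i ∈ J, B i) (1 : X → ℝ) x := by
    intro x
    have hc : ∀ J : Finset ι,
        Set.indicator (⋂ i ∈ J, B i) (1 : X → ℝ) x =
          ∏ i ∈ J, Set.indicator (B i) (1 : X → ℝ) x := by
      intro J
      by_cases h : x ∈ ⋂ i ∈ J, B i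
      · rw [Set.indicator_of_mem h]
        rw [Set.mem_iInter₂] at h
        exact (Finset.prod_eq_one fun i hi => Set.indicator_of_mem (h i hi) _).symm
      · rw [Set.indicator_of_notMem h]
        rw [Set.mem_iInter₂] at h
        push_neg at h
        obtain ⟨i, hiJ, hiB⟩ := h
        exact (Finset.prod_eq_zero hiJ (Set.indicator_of_notMem hiB _)).symm
    have expand : ∑ J ∈ (Finset.univ : Finset ι).powerset,
        (-1 : ℝ) ^ J.card * ∏ i ∈ J, Set.indicator (B i) (1 : X → ℝ) x =
        ∏ i, (1 - Set.indicator (B i) (1 : X → ℝ) x) := by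
      have h1 := Finset.prod_add (fun i => -(Set.indicator (B i) (1 : X → ℝ) x))
        (fun _ => (1 : ℝ)) Finset.univ
      simp only [Finset.prod_const_one, mul_one] at h1
      have h2 : ∀ i : ι, -(Set.indicator (B i) (1 : X → ℝ) x) + 1 =
          1 - Set.indicator (B i) (1 : X → ℝ) x := fun i => by ring
      simp only [h2] at h1
      rw [h1]
      refine (Finset.sum_congr rfl fun J _ => ?_).symm
      have h3 : ∀ i ∈ J, -(Set.indicator (B i) (1 : X → ℝ) x) =
          (-1 : ℝ) * Set.indicator (B i) (1 : X → ℝ) x := fun i _ => by ring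
      rw [Finset.prod_congr rfl h3, Finset.prod_mul_distrib, Finset.prod_const]
    have step : ∀ J ∈ (Finset.univ : Finset ι).powerset,
        (if J.Nonempty then (-1 : ℝ) ^ (J.card + 1) else 0) *
            Set.indicator (⋂ i ∈ J, B i) (1 : X → ℝ) x =
          (if J = ∅ then (1 : ℝ) else 0) -
            (-1 : ℝ) ^ J.card * ∏ i ∈ J, Set.indicator (B i) (1 : X → ℝ) x := by
      intro J _
      rcases Finset.eq_empty_or_nonempty J with rfl | hJ
      · simp
      · rw [if_pos hJ, if_neg (Finset.nonempty_iff_ne_empty.1 hJ), hc J, pow_succ]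
        ring
    rw [Finset.sum_congr rfl step, Finset.sum_sub_distrib, expand,
      Finset.sum_ite_eq' _ (∅ : Finset ι) (fun _ => (1 : ℝ)),
      if_pos (Finset.empty_mem_powerset _)]
    by_cases hx : x ∈ ⋃ i, B i
    · rw [Set.indicator_of_mem hx]
      obtain ⟨i, hi⟩ := Set.mem_iUnion.1 hx
      rw [Finset.prod_eq_zero (Finset.mem_univ i)
        (by rw [Set.indicator_of_mem hi, Pi.one_apply]; ring)]
      simp only [Pi.one_apply]
      ring
    · rw [Set.indicator_of_notMem hx]
      rw [Set.mem_iUnion] at hx; push_neg at hx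
      rw [Finset.prod_eq_one fun i _ => by rw [Set.indicator_of_notMem (hx i)]; ring]
      simp
  have hint : ∀ J : Finset ι, Integrable (fun x =>
      (if J.Nonempty then (-1 : ℝ) ^ (J.card + 1) else 0) *
        Set.indicator (⋂ i ∈ J, B i) (1 : X → ℝ) x) μ := by
    intro J
    rcases Finset.eq_empty_or_nonempty J with rfl | hJ
    · simp
    · refine Integrable.const_mul ?_ _
      rw [integrable_indicator_iff (hmeas J)]
      refine integrableOn_const ?_ (by simp)
      obtain ⟨i0, hi0⟩ := hJ
      exact ne_top_of_le_ne_top (hf i0) (measure_mono (Set.biInter_subset_of_mem hi0))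
  calc (μ (⋃ i, B i)).toReal
      = ∫ x, Set.indicator (⋃ i, B i) (1 : X → ℝ) x ∂μ :=
        (integral_indicator_one (MeasurableSet.iUnion fun i => hm i)).symm
    _ = ∫ x, ∑ J ∈ (Finset.univ : Finset ι).powerset,
          (if J.Nonempty then (-1 : ℝ) ^ (J.card + 1) else 0) *
            Set.indicator (⋂ i ∈ J, B i) (1 : X → ℝ) x ∂μ :=
        integral_congr_ae (Filter.Eventually.of_forall key)
    _ = ∑ J ∈ (Finset.univ : Finset ι).powerset, ∫ x,
          (if J.Nonempty then (-1 : ℝ) ^ (J.card + 1) else 0) *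
            Set.indicator (⋂ i ∈ J, B i) (1 : X → ℝ) x ∂μ :=
        integral_finset_sum _ fun J _ => hint J
    _ = ∑ J ∈ (Finset.univ : Finset ι).powerset,
          (if J.Nonempty then (-1 : ℝ) ^ (J.card + 1) else 0) * (μ (⋂ i ∈ J, B i)).toReal := by
        refine Finset.sum_congr rfl fun J _ => ?_
        rw [integral_const_mul, integral_indicator_one (hmeas J)]
        rfl

/-- Equation (3) of the paper: the joint hypervolume improvement of `q` new objective vectors
`f_1, …, f_q`, i.e. the Lebesgue measure of `⋃_i A_i` where
`A_i = {y : r ≤ y ≤ f_i} \ D(P, r)`, computed via the inclusion–exclusion principle over a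
box decomposition `{S_k}` of the non-dominated space:
`λ_M(⋃ A_i) = ∑_k ∑_{j=1}^q ∑_{|J|=j} (−1)^{j+1} ∏_m [z_{k,J}^(m) − l_k^(m)]_+` with
`z_{k,J}^(m) = min(u_k^(m), min_{i ∈ J} f_i^(m))`. -/
theorem qhvi_box_decomposition (M : ℕ) (hM : 1 ≤ M) (r : Fin M → ℝ)
    (P : Finset (Fin M → ℝ))
    (K : ℕ) (l u : Fin K → Fin M → ℝ) (S : Fin K → Set (Fin M → ℝ))
    (hS : ∀ k, S k = Set.univ.pi fun m => Set.Ico (l k m) (u k m))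
    (hdisj : Pairwise (Function.onFun Disjoint S))
    (hsub : ∀ k, S k ⊆ Set.Ici r)
    (hnd : ∀ k, S k ∩ (⋃ p ∈ P, Set.Icc r p) = ∅)
    (q : ℕ) (f : Fin q → Fin M → ℝ) (A : Fin q → Set (Fin M → ℝ))
    (hA : ∀ i, A i = Set.Icc r (f i) \ ⋃ p ∈ P, Set.Icc r p)
    (hcover : (⋃ i, A i) ⊆ ⋃ k, S k) :
    (volume (⋃ i, A i)).toReal =
      ∑ k, ∑ j ∈ Finset.Icc 1 q,
        ∑ J ∈ Finset.powersetCard j (Finset.univ : Finset (Fin q)),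
          (-1 : ℝ) ^ (j + 1) *
            ∏ m, max (min (u k m) (⨅ i : {x // x ∈ J}, f i.1 m) - l k m) 0 := by
  classical
  set D : Set (Fin M → ℝ) := ⋃ p ∈ P, Set.Icc r p with hD
  set T : Set (Fin M → ℝ) := ⋃ i, A i with hT
  have hDm : MeasurableSet D :=
    MeasurableSet.biUnion P.countable_toSet fun p _ => measurableSet_Icc
  have hAm : ∀ i, MeasurableSet (A i) := fun i => by
    rw [hA i]; exact measurableSet_Icc.diff hDm
  have hTm : MeasurableSet T := MeasurableSet.iUnion hAm
  have hSm : ∀ k, MeasurableSet (S k) := fun k => by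
    rw [hS k]; exact MeasurableSet.univ_pi fun m => measurableSet_Ico
  have hIccfin : ∀ i, volume (Set.Icc r (f i)) ≠ ⊤ := fun i => by
    rw [Real.volume_Icc_pi]
    exact (ENNReal.prod_lt_top fun m _ => ENNReal.ofReal_lt_top).ne
  have hTfin : volume T ≠ ⊤ := by
    have hsub2 : T ⊆ ⋃ i, Set.Icc r (f i) := by
      refine Set.iUnion_mono fun i => ?_
      rw [hA i]; exact Set.diff_subset
    refine ne_top_of_le_ne_top ?_ (measure_mono hsub2)
    refine ne_top_of_le_ne_top ?_ (measure_iUnion_le _)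
    rw [tsum_fintype]
    exact (ENNReal.sum_lt_top.2 fun i _ => (hIccfin i).lt_top).ne
  have hSkT : ∀ k, S k ∩ T = ⋃ i, (S k ∩ Set.Icc r (f i)) := by
    intro k
    rw [hT, Set.inter_iUnion]
    refine Set.iUnion_congr fun i => ?_
    rw [hA i]
    ext x
    constructor
    · rintro ⟨hxS, hxI, -⟩; exact ⟨hxS, hxI⟩
    · rintro ⟨hxS, hxI⟩
      refine ⟨hxS, hxI, fun hxD => ?_⟩
      have h0 := hnd k
      rw [Set.eq_empty_iff_forall_notMem] at h0
      exact h0 x ⟨hxS, hxD⟩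
  have hTun : T = ⋃ k, (S k ∩ T) := by
    calc T = (⋃ k, S k) ∩ T := (Set.inter_eq_right.mpr hcover).symm
      _ = ⋃ k, (S k ∩ T) := Set.iUnion_inter T S
  have hmu : volume T = ∑ k, volume (S k ∩ T) := by
    conv_lhs => rw [hTun]
    rw [← tsum_fintype (L := SummationFilter.unconditional _)]
    exact measure_iUnion
      (fun k k' hkk' => ((hdisj hkk').mono Set.inter_subset_left Set.inter_subset_left))
      (fun k => (hSm k).inter hTm)
  rw [hmu, ENNReal.toReal_sum
    (fun k _ => ne_top_of_le_ne_top hTfin (measure_mono Set.inter_subset_right))]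
  refine Finset.sum_congr rfl fun k _ => ?_
  have hBm : ∀ i, MeasurableSet (S k ∩ Set.Icc r (f i)) :=
    fun i => (hSm k).inter measurableSet_Icc
  have hBf : ∀ i, volume (S k ∩ Set.Icc r (f i)) ≠ ⊤ :=
    fun i => ne_top_of_le_ne_top (hIccfin i) (measure_mono Set.inter_subset_right)
  rw [hSkT k, ie_measure volume _ hBm hBf]
  -- compute the measure of each nonempty intersection
  have hcap : ∀ J : Finset (Fin q), J.Nonempty →
      (volume (⋂ i ∈ J, (S k ∩ Set.Icc r (f i)))).toReal =
        ∏ m, max (min (u k m) (⨅ i : {x // x ∈ J}, f i.1 m) - l k m) 0 := by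
    intro J hJ
    have hne : Nonempty {x // x ∈ J} := by
      obtain ⟨i0, hi0⟩ := hJ; exact ⟨⟨i0, hi0⟩⟩
    set w : Fin M → ℝ := fun m => ⨅ i : {x // x ∈ J}, f i.1 m with hw
    have hset : (⋂ i ∈ J, (S k ∩ Set.Icc r (f i))) =
        Set.univ.pi fun m => Set.Ico (l k m) (u k m) ∩ Set.Iic (w m) := by
      ext x
      simp only [Set.mem_iInter, Set.mem_inter_iff, Set.mem_pi, Set.mem_univ, true_implies,
        Set.mem_Ico, Set.mem_Iic]
      constructor
      · intro h
        obtain ⟨i0, hi0⟩ := hJ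
        have hxS : x ∈ S k := (h i0 hi0).1
        have hx : ∀ m, l k m ≤ x m ∧ x m < u k m := by
          rw [hS k] at hxS
          exact fun m => hxS m (Set.mem_univ m)
        intro m
        refine ⟨hx m, ?_⟩
        exact le_ciInf fun i => (h i.1 i.2).2.2 m
      · intro h
        have hxS : x ∈ S k := by
          rw [hS k]; exact fun m _ => (h m).1
        intro i hi
        refine ⟨hxS, hsub k hxS, fun m => ?_⟩
        exact le_trans (h m).2
          (ciInf_le (Set.Finite.bddBelow (Set.finite_range _)) (⟨i, hi⟩ : {x // x ∈ J}))
      -- end ext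
    rw [hset, volume_pi_pi, ENNReal.toReal_prod]
    refine Finset.prod_congr rfl fun m _ => ?_
    rw [vol_Ico_inter_Iic, ENNReal.toReal_ofReal']
  have hstep : ∀ J ∈ (Finset.univ : Finset (Fin q)).powerset,
      (if J.Nonempty then (-1 : ℝ) ^ (J.card + 1) else 0) *
          (volume (⋂ i ∈ J, (S k ∩ Set.Icc r (f i)))).toReal =
        (if J.Nonempty then (-1 : ℝ) ^ (J.card + 1) *
          ∏ m, max (min (u k m) (⨅ i : {x // x ∈ J}, f i.1 m) - l k m) 0 else 0) := by
    intro J _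
    rcases Finset.eq_empty_or_nonempty J with rfl | hJ
    · simp
    · rw [if_pos hJ, if_pos hJ, hcap J hJ]
  rw [Finset.sum_congr rfl hstep, Finset.powerset_card_biUnion, Finset.sum_biUnion
      (fun i _ j _ hij => Finset.pairwise_disjoint_powersetCard _ hij),
    Finset.card_univ, Fintype.card_fin]
  have hss : Finset.Icc 1 q ⊆ Finset.range (q + 1) := by
    intro j hj
    rw [Finset.mem_Icc] at hj
    rw [Finset.mem_range]
    omega
  have hzero : ∀ j ∈ Finset.range (q + 1), j ∉ Finset.Icc 1 q →
      (∑ J ∈ Finset.powersetCard j (Finset.univ : Finset (Fin q)),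
        (if J.Nonempty then (-1 : ℝ) ^ (J.card + 1) *
          ∏ m, max (min (u k m) (⨅ i : {x // x ∈ J}, f i.1 m) - l k m) 0 else 0)) = 0 := by
    intro j hj hj'
    rw [Finset.mem_range] at hj
    rw [Finset.mem_Icc] at hj'
    have hj0 : j = 0 := by omega
    subst hj0
    rw [Finset.powersetCard_zero, Finset.sum_singleton]
    simp
  refine ((Finset.sum_subset hss hzero).symm).trans ?_
  refine Finset.sum_congr rfl fun j hj => Finset.sum_congr rfl fun J hJ => ?_
  rw [Finset.mem_Icc] at hj
  rw [Finset.mem_powersetCard] at hJ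
  have hcard : J.card = j := hJ.2
  have hne : J.Nonempty := Finset.card_pos.1 (by omega)
  rw [if_pos hne, hcard]
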